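/- The determinant of M equals 18, and the cokernel ℤ¹⁷ / M·ℤ¹⁷ of the linear map ℤ¹⁷ → ℤ¹⁷ given by M is isomorphic as an abelian group to (ℤ/9ℤ) × (ℤ/2ℤ). In particular the discriminant group of the lattice (ℤ¹⁷, M) has minimal number of generators 2. -/

import Mathlib

set_option maxRecDepth 2000
set_option maxHeartbeats 1000000


open Matrix

def M : Matrix (Fin 17) (Fin 17) ℤ :=
  !![-2, 1, 0, 0, 0, 0, 0, 0, 0, 1, 0, 0, 0, 0, 0, 0, 0;
    1, -2, 0, 0, 0, 0, 0, 0, 0, 0, 0, 1, 0, 0, 0, 1, 0;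
    0, 0, -2, 0, 0, 0, 0, 1, 0, 0, 0, 0, 0, 0, 1, 0, 1;
    0, 0, 0, -2, 0, 0, 1, 1, 1, 0, 0, 0, 0, 0, 0, 0, 0;
    0, 0, 0, 0, -2, 0, 0, 0, 1, 0, 0, 0, 0, 0, 0, 0, 0;
    0, 0, 0, 0, 0, -2, 0, 0, 0, 0, 0, 0, 1, 1, 0, 0, 0;
    0, 0, 0, 1, 0, 0, -2, 0, 0, 0, 0, 0, 0, 0, 0, 0, 0;
    0, 0, 1, 1, 0, 0, 0, -2, 0, 0, 0, 0, 0, 0, 0, 0, 0;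
    0, 0, 0, 1, 1, 0, 0, 0, -2, 0, 0, 0, 0, 0, 0, 0, 0;
    1, 0, 0, 0, 0, 0, 0, 0, 0, -2, 1, 0, 0, 0, 0, 0, 0;
    0, 0, 0, 0, 0, 0, 0, 0, 0, 1, -2, 0, 0, 0, 0, 0, 0;
    0, 1, 0, 0, 0, 0, 0, 0, 0, 0, 0, -2, 1, 0, 0, 0, 0;
    0, 0, 0, 0, 0, 1, 0, 0, 0, 0, 0, 1, -2, 0, 0, 0, 0;
    0, 0, 0, 0, 0, 1, 0, 0, 0, 0, 0, 0, 0, -2, 1, 0, 0;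
    0, 0, 1, 0, 0, 0, 0, 0, 0, 0, 0, 0, 0, 1, -2, 0, 0;
    0, 1, 0, 0, 0, 0, 0, 0, 0, 0, 0, 0, 0, 0, 0, -2, 1;
    0, 0, 1, 0, 0, 0, 0, 0, 0, 0, 0, 0, 0, 0, 0, 1, -2]

def Amat : Matrix (Fin 17) (Fin 17) ℤ :=
  !![1, 0, 0, 0, 0, 0, 0, 0, 0, 0, 0, 0, 0, 0, 0, 0, 0;
    1, 2, 0, 0, 0, 0, 0, 0, 0, 0, 0, 0, 0, 0, 0, 0, 0;
    0, 0, 1, 0, 0, 0, 0, 0, 0, 0, 0, 0, 0, 0, 0, 0, 0;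
    0, 0, 0, 1, 0, 0, 0, 0, 0, 0, 0, 0, 0, 0, 0, 0, 0;
    0, 0, 0, 0, 1, 0, 0, 0, 0, 0, 0, 0, 0, 0, 0, 0, 0;
    0, 0, 0, 0, 0, 1, 0, 0, 0, 0, 0, 0, 0, 0, 0, 0, 0;
    0, 0, 0, 1, 0, 0, 2, 0, 0, 0, 0, 0, 0, 0, 0, 0, 0;
    0, 0, 3, 4, 0, 0, 2, 6, 0, 0, 0, 0, 0, 0, 0, 0, 0;
    0, 0, 4, 12, 5, 0, 6, 8, 10, 0, 0, 0, 0, 0, 0, 0, 0;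
    2, 1, 0, 0, 0, 0, 0, 0, 0, 3, 0, 0, 0, 0, 0, 0, 0;
    2, 1, 0, 0, 0, 0, 0, 0, 0, 3, 4, 0, 0, 0, 0, 0, 0;
    3, 4, 0, 0, 0, 0, 0, 0, 0, 2, 1, 5, 0, 0, 0, 0, 0;
    3, 4, 0, 0, 0, 3, 0, 0, 0, 2, 1, 5, 6, 0, 0, 0, 0;
    3, 4, 0, 0, 0, 7, 0, 0, 0, 2, 1, 5, 6, 8, 0, 0, 0;
    3, 4, 12, 18, 6, 7, 9, 15, 12, 2, 1, 5, 6, 8, 9, 0, 0;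
    3, 4, -8, -12, -4, -2, -6, -10, -8, 2, 1, 2, 0, -4, -6, 3, 0;
    -9, -12, 0, 0, 0, -6, 0, 0, 0, -6, -3, -10, -8, -4, -2, -5, 2]

def Bmat : Matrix (Fin 17) (Fin 17) ℤ :=
  !![-2, 1, 0, 0, 0, 0, 0, 0, 0, 1, 0, 0, 0, 0, 0, 0, 0;
    0, -3, 0, 0, 0, 0, 0, 0, 0, 1, 0, 2, 0, 0, 0, 2, 0;
    0, 0, -2, 0, 0, 0, 0, 1, 0, 0, 0, 0, 0, 0, 1, 0, 1;
    0, 0, 0, -2, 0, 0, 1, 1, 1, 0, 0, 0, 0, 0, 0, 0, 0;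
    0, 0, 0, 0, -2, 0, 0, 0, 1, 0, 0, 0, 0, 0, 0, 0, 0;
    0, 0, 0, 0, 0, -2, 0, 0, 0, 0, 0, 0, 1, 1, 0, 0, 0;
    0, 0, 0, 0, 0, 0, -3, 1, 1, 0, 0, 0, 0, 0, 0, 0, 0;
    0, 0, 0, 0, 0, 0, 0, -5, 4, 0, 0, 0, 0, 0, 3, 0, 3;
    0, 0, 0, 0, 0, 0, 0, 0, -3, 0, 0, 0, 0, 0, 4, 0, 4;
    0, 0, 0, 0, 0, 0, 0, 0, 0, -4, 3, 1, 0, 0, 0, 1, 0;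
    0, 0, 0, 0, 0, 0, 0, 0, 0, 0, -5, 1, 0, 0, 0, 1, 0;
    0, 0, 0, 0, 0, 0, 0, 0, 0, 0, 0, -6, 5, 0, 0, 4, 0;
    0, 0, 0, 0, 0, 0, 0, 0, 0, 0, 0, 0, -4, 3, 0, 4, 0;
    0, 0, 0, 0, 0, 0, 0, 0, 0, 0, 0, 0, 0, -9, 8, 4, 0;
    0, 0, 0, 0, 0, 0, 0, 0, 0, 0, 0, 0, 0, 0, 2, 4, 12;
    0, 0, 0, 0, 0, 0, 0, 0, 0, 0, 0, 0, 0, 0, 0, -2, -5;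
    0, 0, 0, 0, 0, 0, 0, 0, 0, 0, 0, 0, 0, 0, 0, 0, -9]

def Pm : Matrix (Fin 17) (Fin 17) ℤ :=
  !![1, 0, 0, 0, 0, 0, 0, 0, 0, 0, 0, 0, 0, 0, 0, 0, 0;
    2, 1, 0, 0, 0, 0, 0, 0, 0, 0, 0, 0, 0, 0, 0, 0, 0;
    0, 0, 1, 0, 0, 0, 0, 0, 0, 0, 0, 0, 0, 0, 0, 0, 0;
    0, 0, -1, 1, 0, 0, 0, 0, 0, 0, 0, 0, 0, 0, 0, 0, 0;
    0, 0, 0, 0, 1, 0, 0, 0, 0, 0, 0, 0, 0, 0, 0, 0, 0;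
    0, 0, 0, 0, 0, 1, 0, 0, 0, 0, 0, 0, 0, 0, 0, 0, 0;
    0, 0, 2, 0, 0, 0, 0, 1, 0, 0, 0, 0, 0, 0, 0, 0, 0;
    0, 0, 0, 0, 0, 0, 0, 0, 0, 1, 0, 0, 0, 0, 0, 0, 0;
    -3, -2, 0, 0, 0, 1, 0, 0, 0, 0, 0, -1, 0, 0, 0, 0, 0;
    4, 3, 0, 0, 0, 0, 0, 0, 0, 0, 0, 2, 1, 0, 0, 0, 0;
    6, 5, 0, 0, 0, 2, 0, 0, 0, 0, 0, 4, 3, 1, 0, 0, 0;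
    7, 6, 0, 0, 0, 3, 0, 0, 0, 0, 0, 5, 4, 2, 1, 0, 0;
    1, 0, 0, 0, 0, 0, 0, 0, 0, 0, 0, 0, 0, 0, 0, -1, 0;
    -3, 0, 0, 0, 0, 0, 0, 0, 0, -2, -1, 0, 0, 0, 0, 3, 0;
    -9, 8, 2, 0, -2, 5, 0, 1, -1, -6, -3, 7, 6, 4, 3, 18, 0;
    6, -20, 4, 10, 6, -8, 5, 7, 8, 4, 2, -16, -12, -4, 0, -30, 1;
    -45, 66, 0, -18, -18, 33, -9, -9, -18, -30, -15, 55, 44, 22, 11, 122, -2]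

def Pm' : Matrix (Fin 17) (Fin 17) ℤ :=
  !![1, 0, 0, 0, 0, 0, 0, 0, 0, 0, 0, 0, 0, 0, 0, 0, 0;
    -2, 1, 0, 0, 0, 0, 0, 0, 0, 0, 0, 0, 0, 0, 0, 0, 0;
    0, 0, 1, 0, 0, 0, 0, 0, 0, 0, 0, 0, 0, 0, 0, 0, 0;
    0, 0, 1, 1, 0, 0, 0, 0, 0, 0, 0, 0, 0, 0, 0, 0, 0;
    0, 0, 0, 0, 1, 0, 0, 0, 0, 0, 0, 0, 0, 0, 0, 0, 0;
    0, 0, 0, 0, 0, 1, 0, 0, 0, 0, 0, 0, 0, 0, 0, 0, 0;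
    0, 0, 0, -2, 2, 0, -3, 0, 0, 0, 4, -5, 11, -5, -2, 2, 1;
    0, 0, -2, 0, 0, 0, 1, 0, 0, 0, 0, 0, 0, 0, 0, 0, 0;
    0, 0, 0, 0, -2, 0, 1, 0, 0, 0, -2, 3, -9, 3, -1, 0, 0;
    0, 0, 0, 0, 0, 0, 0, 1, 0, 0, 0, 0, 0, 0, 0, 0, 0;
    0, 0, 0, 0, 0, 0, 0, -2, 0, 0, 0, 0, -3, -1, 0, 0, 0;
    1, -2, 0, 0, 0, 1, 0, 0, -1, 0, 0, 0, 0, 0, 0, 0, 0;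
    0, 1, 0, 0, 0, -2, 0, 0, 2, 1, 0, 0, 0, 0, 0, 0, 0;
    0, 0, 0, 0, 0, 0, 0, 0, -2, -3, 1, 0, 0, 0, 0, 0, 0;
    0, 0, 0, 0, 0, 0, 0, 0, 1, 2, -2, 1, 0, 0, 0, 0, 0;
    1, 0, 0, 0, 0, 0, 0, 0, 0, 0, 0, 0, -1, 0, 0, 0, 0;
    0, 0, 0, 0, 0, 0, 0, 0, 0, 0, 0, 1, -7, 3, 18, -9, -5]

def Qm : Matrix (Fin 17) (Fin 17) ℤ :=
  !![0, 0, 0, 0, 0, 0, 0, 0, 0, 0, 0, 0, 0, 1, 3, 0, -9;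
    1, 0, 0, 0, 0, 0, 0, 0, 0, 0, 0, 0, -1, 1, 4, 0, -12;
    0, 0, 0, 0, 0, 0, 0, 0, 0, 0, 0, 1, -7, 1, 10, -6, -54;
    0, 0, 0, 0, 0, 0, 1, 0, 0, 0, -2, 3, -9, 3, 20, -12, -108;
    0, 0, 0, 0, 0, 0, 0, 0, 0, 0, 0, 0, 0, 0, 7, -4, -36;
    0, 0, 0, 0, 0, 0, 0, 0, 0, 1, 0, 0, -4, 1, 7, -3, -33;
    0, 0, 0, 1, -1, 0, 2, 0, 0, 0, -3, 4, -10, 4, 11, -7, -63;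
    0, 0, 1, 0, 0, 0, 0, 0, 0, 0, -1, 2, -8, 2, 15, -9, -81;
    0, 0, 0, 0, 1, 0, 0, 0, 0, 0, 0, 0, 0, 0, 14, -8, -72;
    0, 0, 0, 0, 0, 0, 0, 0, 0, 0, 0, 0, 1, 1, 2, 0, -6;
    0, 0, 0, 0, 0, 0, 0, 1, 0, 0, 0, 0, 2, 1, 1, 0, -3;
    0, 1, 0, 0, 0, 0, 0, 0, 0, 0, 0, 0, -2, 1, 5, -1, -19;
    0, 0, 0, 0, 0, 1, 0, 0, -1, 0, 0, 0, -3, 1, 6, -2, -26;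
    0, 0, 0, 0, 0, 0, 0, 0, 1, 2, 0, 0, -5, 1, 8, -4, -40;
    0, 0, 0, 0, 0, 0, 0, 0, 0, 0, 1, 0, -6, 1, 9, -5, -47;
    0, 0, 0, 0, 0, 0, 0, 0, 0, 0, 0, 0, 0, 0, 0, 1, 4;
    0, 0, 0, 0, 0, 0, 0, 0, 0, 0, 0, 0, 0, -1, -4, 2, 20]

def uvec : Fin 17 → ℤ := ![7, 0, 0, 0, 1, 0, 0, 0, 0, 0, 0, 0, 0, 0, 0, -10, 7]

def rvec : Fin 17 → ℤ := Pm 16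

def f0 : (Fin 17 → ℤ) →ₗ[ℤ] ZMod 9 × ZMod 2 where
  toFun x := (((rvec ⬝ᵥ x : ℤ) : ZMod 9), ((rvec ⬝ᵥ x : ℤ) : ZMod 2))
  map_add' x y := by
    simp only [dotProduct_add, Int.cast_add, Prod.mk_add_mk]
  map_smul' c x := by
    have h : rvec ⬝ᵥ (c • x) = c * (rvec ⬝ᵥ x) := by
      rw [dotProduct_smul, smul_eq_mul]
    show ((((rvec ⬝ᵥ (c • x) : ℤ) : ZMod 9), ((rvec ⬝ᵥ (c • x) : ℤ) : ZMod 2)) : ZMod 9 × ZMod 2)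
        = c • (((rvec ⬝ᵥ x : ℤ) : ZMod 9), ((rvec ⬝ᵥ x : ℤ) : ZMod 2))
    rw [h, Prod.smul_mk, zsmul_eq_mul, zsmul_eq_mul, Int.cast_mul, Int.cast_mul]

lemma hAM : Amat * M = Bmat := by decide

lemma hAlow : ∀ i j : Fin 17, i < j → Amat i j = 0 := by
  exact @of_decide_eq_true _ (@Fintype.decidableForallFintype _ _ (fun i => @Fintype.decidableForallFintype _ _ (fun j => instDecidableForall) _) _) (by decide)

lemma hBup : ∀ i j : Fin 17, j < i → Bmat i j = 0 := by
  exact @of_decide_eq_true _ (@Fintype.decidableForallFintype _ _ (fun i => @Fintype.decidableForallFintype _ _ (fun j => instDecidableForall) _) _) (by decide)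

lemma hdetM : M.det = 18 := by
  have hA : Amat.det = 37324800 := by
    rw [Matrix.det_of_lowerTriangular Amat
      (fun i j h => hAlow i j (OrderDual.toDual_lt_toDual.mp h))]
    simp [Fin.prod_univ_succ, Amat]
  have hB : Bmat.det = 671846400 := by
    rw [Matrix.det_of_upperTriangular (fun i j h => hBup i j h)]
    norm_num [Fin.prod_univ_succ, Bmat]
  have h : Amat.det * M.det = Bmat.det :=
    (Matrix.det_mul Amat M).symm.trans (congrArg Matrix.det hAM)
  rw [hA, hB] at h
  omega

def dvec : Fin 17 → ℤ := fun i => if i = 16 then 18 else 1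

lemma hPP' : Pm * Pm' = 1 := by decide

lemma hP'P : Pm' * Pm = 1 := by decide

lemma hPMQ : Pm * M * Qm = Matrix.diagonal dvec := by decide

lemma hrM : Matrix.vecMul rvec M = fun j => 18 * uvec j := by decide

lemma hx1 : rvec ⬝ᵥ (fun i => Pm' i 16) = 1 := by decide

lemma f0_fst (x : Fin 17 → ℤ) : (f0 x).1 = ((rvec ⬝ᵥ x : ℤ) : ZMod 9) := rfl

lemma f0_snd (x : Fin 17 → ℤ) : (f0 x).2 = ((rvec ⬝ᵥ x : ℤ) : ZMod 2) := rfl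

lemma hker : LinearMap.range (Matrix.toLin' M) ≤ LinearMap.ker f0 := by
  rintro x ⟨y, rfl⟩
  have h1 : rvec ⬝ᵥ (M *ᵥ y) = 18 * (uvec ⬝ᵥ y) := by
    rw [Matrix.dotProduct_mulVec, hrM]
    simp [dotProduct, Finset.mul_sum, mul_assoc]
  simp only [LinearMap.mem_ker, Matrix.toLin'_apply]
  have : f0 (M *ᵥ y) = (((rvec ⬝ᵥ (M *ᵥ y) : ℤ) : ZMod 9), ((rvec ⬝ᵥ (M *ᵥ y) : ℤ) : ZMod 2)) := rfl
  have e9 : ((18 * (uvec ⬝ᵥ y) : ℤ) : ZMod 9) = 0 := by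
    rw [ZMod.intCast_zmod_eq_zero_iff_dvd]
    exact ⟨2 * (uvec ⬝ᵥ y), by push_cast; ring⟩
  have e2 : ((18 * (uvec ⬝ᵥ y) : ℤ) : ZMod 2) = 0 := by
    rw [ZMod.intCast_zmod_eq_zero_iff_dvd]
    exact ⟨9 * (uvec ⬝ᵥ y), by push_cast; ring⟩
  rw [this, h1, e9, e2]
  rfl

lemma hsurj : Function.Surjective f0 := by
  intro p
  have hfin : ∀ p : ZMod 9 × ZMod 2, ∃ n : Fin 18, (((n : ℕ) : ZMod 9), ((n : ℕ) : ZMod 2)) = p := by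
    decide
  obtain ⟨n, hn⟩ := hfin p
  refine ⟨(n : ℕ) • (fun i => Pm' i 16), ?_⟩
  have hx : f0 (fun i => Pm' i 16) = (1, 1) := by
    have : f0 (fun i => Pm' i 16)
        = (((rvec ⬝ᵥ (fun i => Pm' i 16) : ℤ) : ZMod 9),
           ((rvec ⬝ᵥ (fun i => Pm' i 16) : ℤ) : ZMod 2)) := rfl
    rw [this, hx1]
    simp
  rw [map_nsmul, hx, ← hn]
  simp [Prod.ext_iff, nsmul_eq_mul]

lemma hinj : ∀ x : Fin 17 → ℤ, f0 x = 0 → x ∈ LinearMap.range (Matrix.toLin' M) := by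
  intro x hx
  have h9 : (9 : ℤ) ∣ rvec ⬝ᵥ x := by
    have := congrArg Prod.fst hx
    rw [f0_fst] at this
    have h := (ZMod.intCast_zmod_eq_zero_iff_dvd (rvec ⬝ᵥ x) 9).mp this
    exact_mod_cast h
  have h2 : (2 : ℤ) ∣ rvec ⬝ᵥ x := by
    have := congrArg Prod.snd hx
    rw [f0_snd] at this
    have h := (ZMod.intCast_zmod_eq_zero_iff_dvd (rvec ⬝ᵥ x) 2).mp this
    exact_mod_cast h
  have h18 : (18 : ℤ) ∣ rvec ⬝ᵥ x := by omega
  obtain ⟨a, ha⟩ := h18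
  set z : Fin 17 → ℤ := Function.update (Pm *ᵥ x) 16 a with hz
  have key : (Matrix.diagonal dvec) *ᵥ z = Pm *ᵥ x := by
    funext i
    rw [Matrix.mulVec_diagonal]
    by_cases h : i = 16
    · subst h
      have ht16 : (Pm *ᵥ x) 16 = rvec ⬝ᵥ x := rfl
      simp [hz, dvec, ht16, ha]
    · simp [hz, dvec, h, Function.update_of_ne h]
  have hmain : M *ᵥ (Qm *ᵥ z) = x := by
    have h1 : Pm *ᵥ (M *ᵥ (Qm *ᵥ z)) = Pm *ᵥ x := by
      rw [Matrix.mulVec_mulVec, Matrix.mulVec_mulVec, hPMQ, key]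
    calc M *ᵥ (Qm *ᵥ z) = (Pm' * Pm) *ᵥ (M *ᵥ (Qm *ᵥ z)) := by
          rw [hP'P, Matrix.one_mulVec]
      _ = Pm' *ᵥ (Pm *ᵥ (M *ᵥ (Qm *ᵥ z))) := by rw [← Matrix.mulVec_mulVec]
      _ = Pm' *ᵥ (Pm *ᵥ x) := by rw [h1]
      _ = x := by rw [Matrix.mulVec_mulVec, hP'P, Matrix.one_mulVec]
  exact ⟨Qm *ᵥ z, by rw [Matrix.toLin'_apply]; exact hmain⟩

theorem stmt_7 :
    M.det = 18 ∧
    Nonempty (((Fin 17 → ℤ) ⧸ LinearMap.range (Matrix.toLin' M)) ≃+ (ZMod 9 × ZMod 2)) := by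
  refine ⟨hdetM, ⟨?_⟩⟩
  set p := LinearMap.range (Matrix.toLin' M)
  have hle : p ≤ LinearMap.ker f0 := hker
  set fbar := Submodule.liftQ p f0 hle with hfbar
  have hinj' : Function.Injective fbar := by
    rw [← LinearMap.ker_eq_bot]
    apply Submodule.ker_liftQ_eq_bot
    intro x hx
    exact hinj x hx
  have hsurj' : Function.Surjective fbar := by
    intro q
    obtain ⟨x, hx⟩ := hsurj q
    exact ⟨Submodule.Quotient.mk x, by rw [hfbar, Submodule.liftQ_apply, hx]⟩
  exact (LinearEquiv.ofBijective fbar ⟨hinj', hsurj'⟩).toAddEquiv
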